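/- Let c > 0, r > 1, 0 < ε < 1 and c(ε) = (1−ε)c/√2. Then there exists a constant C such that for all x ≥ 16, ∑_{√(x/r) < p ≤ √x} (x/p) · e^{−c√(log(x/p))} ≤ C · x · e^{−c(ε)√(log x)}, where the sum is over primes p in the interval (√(x/r), √x]. -/

import Mathlib

open Real Finset
open scoped Classical

theorem stmt_14 (c r ε : ℝ) (hc : 0 < c) (hr : 1 < r) (hε0 : 0 < ε) (hε1 : ε < 1) :
    ∃ C : ℝ, 0 < C ∧ ∀ x : ℝ, 16 ≤ x →
      (∑ p ∈ (Finset.range (Nat.floor (Real.sqrt x) + 1)).filter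
          (fun p => Nat.Prime p ∧ Real.sqrt (x / r) < (p : ℝ) ∧ (p : ℝ) ≤ Real.sqrt x),
          (x / p) * Real.exp (-c * Real.sqrt (Real.log (x / p)))) ≤
        C * x * Real.exp (-((1 - ε) * c / Real.sqrt 2) * Real.sqrt (Real.log x)) := by
  refine ⟨2 * Real.sqrt r, by positivity, ?_⟩
  intro x hx
  have hx0 : (0:ℝ) < x := by linarith
  have hr0 : (0:ℝ) < r := by linarith
  have hsx : (0:ℝ) < Real.sqrt x := Real.sqrt_pos.mpr hx0
  have hlogx : (0:ℝ) ≤ Real.log x := Real.log_nonneg (by linarith)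
  set E := Real.exp (-((1 - ε) * c / Real.sqrt 2) * Real.sqrt (Real.log x)) with hE
  have hE0 : 0 < E := Real.exp_pos _
  set S := (Finset.range (Nat.floor (Real.sqrt x) + 1)).filter
      (fun p => Nat.Prime p ∧ Real.sqrt (x / r) < (p : ℝ) ∧ (p : ℝ) ≤ Real.sqrt x) with hS
  have hterm : ∀ p ∈ S, (x / p) * Real.exp (-c * Real.sqrt (Real.log (x / p)))
      ≤ Real.sqrt r * Real.sqrt x * E := by
    intro p hp
    rw [hS, Finset.mem_filter] at hp
    obtain ⟨-, hprime, h1, h2⟩ := hp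
    have hp0 : (0:ℝ) < p := by exact_mod_cast hprime.pos
    have hsr : (0:ℝ) < Real.sqrt r := Real.sqrt_pos.mpr hr0
    have hxr : Real.sqrt (x / r) = Real.sqrt x / Real.sqrt r := Real.sqrt_div hx0.le r
    have h1' : Real.sqrt x < (p:ℝ) * Real.sqrt r := by
      rw [hxr, div_lt_iff₀ hsr] at h1; exact h1
    have hxp : x / p ≤ Real.sqrt r * Real.sqrt x := by
      rw [div_le_iff₀ hp0]
      nlinarith [Real.mul_self_sqrt hx0.le, hsx, hsr]
    have hlog2 : Real.log x / 2 ≤ Real.log (x / p) := by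
      rw [Real.log_div hx0.ne' hp0.ne']
      have hlp : Real.log p ≤ Real.log x / 2 := by
        have := Real.log_le_log hp0 h2
        rwa [Real.log_sqrt hx0.le] at this
      linarith
    have hsqrtlog : Real.sqrt (Real.log x) / Real.sqrt 2 ≤ Real.sqrt (Real.log (x / p)) := by
      rw [← Real.sqrt_div hlogx]
      exact Real.sqrt_le_sqrt hlog2
    have hexp : Real.exp (-c * Real.sqrt (Real.log (x / p))) ≤ E := by
      rw [hE]
      apply Real.exp_le_exp.mpr
      have t0 : (0:ℝ) ≤ Real.sqrt (Real.log x) := Real.sqrt_nonneg _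
      have h2s : (0:ℝ) < Real.sqrt 2 := by positivity
      have step1 : (1 - ε) * c / Real.sqrt 2 * Real.sqrt (Real.log x)
          ≤ c * (Real.sqrt (Real.log x) / Real.sqrt 2) := by
        rw [show (1 - ε) * c / Real.sqrt 2 * Real.sqrt (Real.log x)
            = ((1 - ε) * c * Real.sqrt (Real.log x)) / Real.sqrt 2 by ring,
          show c * (Real.sqrt (Real.log x) / Real.sqrt 2)
            = (c * Real.sqrt (Real.log x)) / Real.sqrt 2 by ring]
        gcongr
        nlinarith
      have step2 : c * (Real.sqrt (Real.log x) / Real.sqrt 2)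
          ≤ c * Real.sqrt (Real.log (x / p)) :=
        mul_le_mul_of_nonneg_left hsqrtlog hc.le
      linarith
    have hxpn : (0:ℝ) ≤ x / p := by positivity
    exact mul_le_mul hxp hexp (Real.exp_pos _).le (by positivity)
  have hcard : (S.card : ℝ) ≤ 2 * Real.sqrt x := by
    have h1 : S.card ≤ Nat.floor (Real.sqrt x) + 1 := by
      rw [hS]
      calc ((Finset.range (Nat.floor (Real.sqrt x) + 1)).filter _).card
          ≤ (Finset.range (Nat.floor (Real.sqrt x) + 1)).card := Finset.card_filter_le _ _
        _ = Nat.floor (Real.sqrt x) + 1 := Finset.card_range _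
    have h2 : ((Nat.floor (Real.sqrt x) : ℝ)) ≤ Real.sqrt x := Nat.floor_le hsx.le
    have hsx4 : (4:ℝ) ≤ Real.sqrt x := by
      have : Real.sqrt 16 ≤ Real.sqrt x := Real.sqrt_le_sqrt hx
      simpa [show (16:ℝ) = 4^2 by norm_num, Real.sqrt_sq] using this
    have := (Nat.cast_le (α := ℝ)).mpr h1
    push_cast at this
    linarith
  have sum_le : (∑ p ∈ S, (x / p) * Real.exp (-c * Real.sqrt (Real.log (x / p))))
      ≤ (S.card : ℝ) * (Real.sqrt r * Real.sqrt x * E) := by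
    calc (∑ p ∈ S, (x / p) * Real.exp (-c * Real.sqrt (Real.log (x / p))))
        ≤ ∑ _p ∈ S, Real.sqrt r * Real.sqrt x * E := Finset.sum_le_sum hterm
      _ = (S.card : ℝ) * (Real.sqrt r * Real.sqrt x * E) := by
          rw [Finset.sum_const, nsmul_eq_mul]
  have final : (S.card : ℝ) * (Real.sqrt r * Real.sqrt x * E)
      ≤ 2 * Real.sqrt r * x * E := by
    have h1 : (S.card : ℝ) * (Real.sqrt r * Real.sqrt x * E)
        ≤ (2 * Real.sqrt x) * (Real.sqrt r * Real.sqrt x * E) :=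
      mul_le_mul_of_nonneg_right hcard (by positivity)
    have h2 : (2 * Real.sqrt x) * (Real.sqrt r * Real.sqrt x * E)
        = 2 * Real.sqrt r * x * E := by
      rw [show (2 * Real.sqrt x) * (Real.sqrt r * Real.sqrt x * E)
          = 2 * Real.sqrt r * (Real.sqrt x * Real.sqrt x) * E by ring,
        Real.mul_self_sqrt hx0.le]
    linarith
  linarith
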